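/- Any filter combination F(x) that contains more than one equality-to-a-constant conjunct is redundant: a combination containing two positive equalities to distinct constants, or a positive and a negative equality, contains redundant or unsatisfiable conjuncts; and a combination whose equality conjuncts are all negative is equivalent to a set of combinations each containing at most one equality-to-a-constant conjunct (using the fresh shape ν defined by ν(x) ↔ ⋀_{c∈C} x ≠ c for the set C of known constants). -/
import Mathlib


/-!
STATEMENT 11.  Any filter combination containing more than one
equality-to-a-constant conjunct is redundant (using the fresh shape `ν`
axiomatised by `ν(x) ↔ ⋀_{c ∈ C} x ≠ c` over the set `C` of known
constants).
-/

namespace SHACL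

/-- RDF terms. -/
abbrev Term := ℕ

/-- Names of the monadic filter predicates. -/
abbrev FName := ℕ

/-- Filter literals: positive and negative equality to a constant, the fresh
shape `ν`, and positive/negative occurrences of monadic filter predicates. -/
inductive FLit
  | eq (c : Term)
  | ne (c : Term)
  | nu
  | fPos (F : FName)
  | fNeg (F : FName)
deriving DecidableEq

/-- A filter combination: a conjunction of pairwise distinct filter
literals. -/
abbrev FComb := Finset FLit

/-- Truth of a filter literal at an RDF term; `C` is the finite set of known
constants (distinct constant symbols denote distinct RDF terms, by the unique
name assumption) and `ν(x)` holds iff `x` is none of the known constants. -/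
def FLit.holds (C : Finset Term) (fi : FName → Term → Prop) (x : Term) :
    FLit → Prop
  | .eq c => x = c
  | .ne c => x ≠ c
  | .nu => x ∉ C
  | .fPos F => fi F x
  | .fNeg F => ¬ fi F x

/-- `γ(F(x))`: the set of RDF terms satisfying a filter combination. -/
def gammaSet (C : Finset Term) (fi : FName → Term → Prop) (comb : FComb) :
    Set Term :=
  {x | ∀ l ∈ comb, l.holds C fi x}

/-- Whether a literal is an equality-to-a-constant conjunct (positive or
negated). -/
def FLit.isEq : FLit → Bool
  | .eq _ => true
  | .ne _ => true
  | _ => false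

/-- Number of equality-to-a-constant conjuncts of a combination. -/
def eqCount (comb : FComb) : ℕ := (comb.filter (fun l => l.isEq)).card

/-- Redundancy of a filter combination: either a proper subset of its
conjuncts has the same set of satisfiers; or it is unsatisfiable while a
proper subset of it is already unsatisfiable; or it is equivalent (same
satisfying RDF terms) to a finite set of filter combinations each containing
at most one equality-to-a-constant conjunct. -/
def Redundant (C : Finset Term) (fi : FName → Term → Prop) (comb : FComb) :
    Prop :=
  (∃ comb' : FComb, comb' ⊂ comb ∧ gammaSet C fi comb' = gammaSet C fi comb) ∨
  (gammaSet C fi comb = ∅ ∧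
    ∃ comb' : FComb, comb' ⊂ comb ∧ gammaSet C fi comb' = ∅) ∨
  (∃ S : Finset FComb, (∀ c ∈ S, eqCount c ≤ 1) ∧
    gammaSet C fi comb = ⋃ c ∈ S, gammaSet C fi c)

/-- Lemma on equality-to-a-constant: any filter combination
whose constants are among the known constants `C` and which contains more
than one equality-to-a-constant conjunct is redundant. -/
theorem equality_filter_redundant
    (C : Finset Term) (fi : FName → Term → Prop) (comb : FComb)
    (hC : ∀ l ∈ comb, ∀ c : Term, (l = FLit.eq c ∨ l = FLit.ne c) → c ∈ C)
    (h : 1 < eqCount comb) :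
    Redundant C fi comb := by
  classical
  by_cases hpos : ∃ c, FLit.eq c ∈ comb
  · obtain ⟨c, hc⟩ := hpos
    obtain ⟨l, hlE, hlne⟩ :=
      Finset.exists_mem_ne h (FLit.eq c)
    rw [Finset.mem_filter] at hlE
    obtain ⟨hlmem, hlisEq⟩ := hlE
    match l, hlne, hlmem, hlisEq with
    | FLit.eq c', hlne, hlmem, _ =>
      have hcc : c' ≠ c := fun h' => hlne (by rw [h'])
      have hempty : gammaSet C fi comb = ∅ := by
        ext x
        simp only [Set.mem_empty_iff_false, iff_false]
        intro hx
        have h1 := hx _ hc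
        have h2 := hx _ hlmem
        simp only [FLit.holds] at h1 h2
        exact hcc (h2 ▸ h1 ▸ rfl)
      right; right
      exact ⟨∅, by simp, by simp [hempty]⟩
    | FLit.ne c', hlne, hlmem, _ =>
      by_cases hcc : c' = c
      · subst hcc
        have hempty : gammaSet C fi comb = ∅ := by
          ext x
          simp only [Set.mem_empty_iff_false, iff_false]
          intro hx
          have h1 := hx _ hc
          have h2 := hx _ hlmem
          simp only [FLit.holds] at h1 h2
          exact h2 h1
        right; right
        exact ⟨∅, by simp, by simp [hempty]⟩
      · left
        refine ⟨comb.erase (FLit.ne c'), Finset.erase_ssubset hlmem, ?_⟩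
        ext x
        constructor
        · intro hx l' hl'
          by_cases hl'' : l' = FLit.ne c'
          · subst hl''
            have heq := hx _ (Finset.mem_erase.mpr ⟨by simp, hc⟩)
            simp only [FLit.holds] at heq ⊢
            rw [heq]
            exact fun hh => hcc hh.symm
          · exact hx _ (Finset.mem_erase.mpr ⟨hl'', hl'⟩)
        · intro hx l' hl'
          exact hx _ (Finset.mem_erase.mp hl').2
  · right; right
    set base := comb.filter (fun l => ¬ l.isEq) with hbase
    have hbfilter : base.filter (fun l => l.isEq) = ∅ := by
      ext l
      by_cases hb : l.isEq <;> simp [hbase, hb]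
    refine ⟨insert (insert FLit.nu base)
      ((C.filter (fun c => FLit.ne c ∉ comb)).image
        (fun c => insert (FLit.eq c) base)), ?_, ?_⟩
    · intro s hs
      rcases Finset.mem_insert.mp hs with rfl | hs
      · unfold eqCount
        rw [Finset.filter_insert, if_neg (by decide), hbfilter]
        simp
      · obtain ⟨c', _, rfl⟩ := Finset.mem_image.mp hs
        unfold eqCount
        rw [Finset.filter_insert, if_pos (show (FLit.eq c').isEq = true from rfl), hbfilter]
        simp
    · ext x
      simp only [Set.mem_iUnion, exists_prop]
      constructor
      · intro hx
        by_cases hxC : x ∈ C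
        · refine ⟨insert (FLit.eq x) base, ?_, ?_⟩
          · apply Finset.mem_insert_of_mem
            apply Finset.mem_image.mpr
            refine ⟨x, Finset.mem_filter.mpr ⟨hxC, ?_⟩, rfl⟩
            intro hne
            exact (hx _ hne) rfl
          · intro l hl
            rcases Finset.mem_insert.mp hl with rfl | hl
            · rfl
            · exact hx _ (Finset.mem_filter.mp hl).1
        · refine ⟨insert FLit.nu base, Finset.mem_insert_self _ _, ?_⟩
          intro l hl
          rcases Finset.mem_insert.mp hl with rfl | hl
          · exact hxC
          · exact hx _ (Finset.mem_filter.mp hl).1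
      · rintro ⟨s, hs, hxs⟩
        intro l hl
        by_cases hEq : l.isEq = true
        · match l, hEq, hl with
          | FLit.eq c, _, hl => exact absurd ⟨c, hl⟩ hpos
          | FLit.ne c, _, hl =>
            have hcC : c ∈ C := hC _ hl c (Or.inr rfl)
            rcases Finset.mem_insert.mp hs with rfl | hs
            · have hnu : x ∉ C := hxs _ (Finset.mem_insert_self _ _)
              intro hxc
              exact hnu (hxc ▸ hcC)
            · obtain ⟨c', hc', rfl⟩ := Finset.mem_image.mp hs
              have hxc' : x = c' := hxs _ (Finset.mem_insert_self _ _)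
              have hc'ne : FLit.ne c' ∉ comb := (Finset.mem_filter.mp hc').2
              intro hxc
              apply hc'ne
              have : c = c' := by rw [← hxc, hxc']
              rwa [this] at hl
        · have hlb : l ∈ base := Finset.mem_filter.mpr ⟨hl, by simp [hEq]⟩
          rcases Finset.mem_insert.mp hs with rfl | hs
          · exact hxs _ (Finset.mem_insert_of_mem hlb)
          · obtain ⟨c', hc', rfl⟩ := Finset.mem_image.mp hs
            exact hxs _ (Finset.mem_insert_of_mem hlb)

end SHACL
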